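/- Let A be an n×n Hermitian matrix, β > 0, z a stationary point of f(z) = (1/2) z* A z + (β/2) Σₖ |zₖ|⁴ on the complex unit sphere with multiplier λ, and H = A + 2β diag(|z|²) − 2λ I positive semidefinite. Then every global minimizer y of f on the unit sphere satisfies |y_k| = |z_k| for all k ∈ [n]. -/

import Mathlib

open Matrix Finset
open scoped ComplexOrder

lemma diag_quad {n : ℕ} (d : Fin n → ℝ) (y : Fin n → ℂ) :
    (star y ⬝ᵥ (Matrix.diagonal (fun k => ((d k : ℝ) : ℂ))).mulVec y).re
      = ∑ k, d k * ‖y k‖ ^ 2 := by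
  simp only [dotProduct, Matrix.mulVec_diagonal, Pi.star_apply, Complex.re_sum]
  refine Finset.sum_congr rfl fun k _ => ?_
  have h1 : star (y k) * ((d k : ℂ) * y k)
      = ((d k * ‖y k‖ ^ 2 : ℝ) : ℂ) := by
    show (starRingEnd ℂ) (y k) * ((d k : ℂ) * y k) = _
    calc (starRingEnd ℂ) (y k) * ((d k : ℂ) * y k)
        = (d k : ℂ) * (y k * (starRingEnd ℂ) (y k)) := by ring
      _ = (d k : ℂ) * ((‖y k‖ : ℂ) ^ 2) := by rw [Complex.mul_conj']
      _ = _ := by push_cast; ring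
  rw [h1, Complex.ofReal_re]

lemma self_quad {n : ℕ} (y : Fin n → ℂ) :
    (star y ⬝ᵥ y).re = ∑ k, ‖y k‖ ^ 2 := by
  simp only [dotProduct, Pi.star_apply, Complex.re_sum]
  refine Finset.sum_congr rfl fun k _ => ?_
  have h1 : star (y k) * y k = ((‖y k‖ ^ 2 : ℝ) : ℂ) := by
    show (starRingEnd ℂ) (y k) * y k = _
    rw [mul_comm, Complex.mul_conj']
    push_cast
    ring
  rw [h1, Complex.ofReal_re]

theorem stmt1 {n : ℕ} (A : Matrix (Fin n) (Fin n) ℂ) (hA : A.IsHermitian)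
    (β : ℝ) (hβ : 0 < β) (z : Fin n → ℂ) (hz : ∑ k, ‖z k‖ ^ 2 = 1)
    (lam : ℝ)
    (hlam : lam = (1 / 2) * (star z ⬝ᵥ A.mulVec z).re + β * ∑ k, ‖z k‖ ^ 4)
    (hstat : ∀ k, A.mulVec z k + ((2 * β * ‖z k‖ ^ 2 : ℝ) : ℂ) * z k
      = ((2 * lam : ℝ) : ℂ) * z k)
    (hH : (A + (2 * β) • Matrix.diagonal (fun k => ((‖z k‖ ^ 2 : ℝ) : ℂ))
        - (2 * lam) • (1 : Matrix (Fin n) (Fin n) ℂ)).PosSemidef)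
    (y : Fin n → ℂ) (hy : ∑ k, ‖y k‖ ^ 2 = 1)
    (hglob : ∀ w : Fin n → ℂ, ∑ k, ‖w k‖ ^ 2 = 1 →
      (1 / 2) * (star y ⬝ᵥ A.mulVec y).re + (β / 2) * ∑ k, ‖y k‖ ^ 4 ≤
      (1 / 2) * (star w ⬝ᵥ A.mulVec w).re + (β / 2) * ∑ k, ‖w k‖ ^ 4) :
    ∀ k, ‖y k‖ = ‖z k‖ := by
  set Q : ℝ := (star y ⬝ᵥ A.mulVec y).re with hQ
  set R : ℝ := (star z ⬝ᵥ A.mulVec z).re with hR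
  set S : ℝ := ∑ k, ‖y k‖ ^ 4 with hS
  set T : ℝ := ∑ k, ‖z k‖ ^ 4 with hT
  set D : ℝ := ∑ k, ‖z k‖ ^ 2 * ‖y k‖ ^ 2 with hD
  have hpsd := hH.dotProduct_mulVec_nonneg y
  have hre : (0:ℝ) ≤ Q + 2 * β * D - 2 * lam := by
    have h1 := (Complex.le_def.mp hpsd).1
    rw [Complex.zero_re] at h1
    rw [Matrix.sub_mulVec, Matrix.add_mulVec, Matrix.smul_mulVec,
      Matrix.smul_mulVec, Matrix.one_mulVec, dotProduct_sub,
      dotProduct_add, dotProduct_smul, dotProduct_smul,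
      Complex.sub_re, Complex.add_re, Complex.smul_re, Complex.smul_re,
      diag_quad (fun k => ‖z k‖ ^ 2) y, self_quad y, hy] at h1
    have : Q + 2 * β * D - 2 * lam
        = Q + (2 * β) • (∑ k, ‖z k‖ ^ 2 * ‖y k‖ ^ 2) - (2 * lam) • (1:ℝ) := by
      simp [smul_eq_mul, hD]
    linarith [h1, this.le, this.ge]
  have hg := hglob z hz
  rw [← hR, ← hT] at hg
  have hsum : ∑ k, (‖y k‖ ^ 2 - ‖z k‖ ^ 2) ^ 2 ≤ 0 := by
    have he : ∑ k, (‖y k‖ ^ 2 - ‖z k‖ ^ 2) ^ 2 = S + T - 2 * D := by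
      rw [hS, hT, hD, ← Finset.sum_add_distrib, Finset.mul_sum, ← Finset.sum_sub_distrib]
      refine Finset.sum_congr rfl fun k _ => ?_
      ring
    rw [he]
    nlinarith [hre, hg, hlam]
  have hnn : ∀ k ∈ Finset.univ, (0:ℝ) ≤ (‖y k‖ ^ 2 - ‖z k‖ ^ 2) ^ 2 :=
    fun k _ => sq_nonneg _
  have hzero : ∑ k, (‖y k‖ ^ 2 - ‖z k‖ ^ 2) ^ 2 = 0 :=
    le_antisymm hsum (Finset.sum_nonneg hnn)
  intro k
  have hk : (‖y k‖ ^ 2 - ‖z k‖ ^ 2) ^ 2 = 0 :=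
    (Finset.sum_eq_zero_iff_of_nonneg hnn).mp hzero k (Finset.mem_univ k)
  have hk2 : ‖y k‖ ^ 2 = ‖z k‖ ^ 2 := by nlinarith [sq_nonneg (‖y k‖ ^ 2 - ‖z k‖ ^ 2)]
  nlinarith [norm_nonneg (y k), norm_nonneg (z k), hk2]
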